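/- Let n ≥ 1, G = ℍⁿ = {x ∈ ℝⁿ : xₙ > 0}, x ∈ G, and r ∈ (0, xₙ). Then the open Euclidean ball B(x,r) equals the triangular-ratio metric ball B_s(c, t), where c agrees with x in the first n−1 coordinates and has n-th coordinate √(xₙ² − r²), and t = (xₙ − √(xₙ² − r²))/r. -/

import Mathlib

set_option maxHeartbeats 1000000

/-- The triangular ratio metric `s_G(x,y) = sup_{z ∈ ∂G} |x−y|/(|z−x|+|z−y|)`. -/
noncomputable def sMetric {n : ℕ} (G : Set (EuclideanSpace ℝ (Fin n)))
    (x y : EuclideanSpace ℝ (Fin n)) : ℝ :=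
  ⨆ z ∈ frontier G, dist x y / (dist z x + dist z y)

/-- The metric ball `B_s(x,r) = {y ∈ G : s_G(x,y) < r}`. -/
def sBall {n : ℕ} (G : Set (EuclideanSpace ℝ (Fin n))) (x : EuclideanSpace ℝ (Fin n))
    (r : ℝ) : Set (EuclideanSpace ℝ (Fin n)) :=
  {y ∈ G | sMetric G x y < r}

lemma my_frontier_halfspace {n : ℕ} (i : Fin n) :
    frontier {w : EuclideanSpace ℝ (Fin n) | 0 < w i} = {w | w i = 0} := by
  have h1 : IsOpen {w : EuclideanSpace ℝ (Fin n) | 0 < w i} :=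
    isOpen_lt continuous_const ((EuclideanSpace.proj i).continuous)
  rw [frontier, h1.interior_eq, closure_open_halfSpace]
  ext w
  simp only [Set.mem_diff, Set.mem_setOf_eq, not_lt]
  constructor
  · rintro ⟨h2, h3⟩; linarith
  · intro h; exact ⟨le_of_eq h.symm, le_of_eq h⟩

lemma my_dist_sq {n : ℕ} (a b : EuclideanSpace ℝ (Fin n)) :
    dist a b ^ 2 = ∑ j, (a j - b j) ^ 2 := by
  rw [EuclideanSpace.dist_eq, Real.sq_sqrt (by positivity)]
  exact Finset.sum_congr rfl fun j _ => by rw [Real.dist_eq, sq_abs]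

lemma my_dist_reflect {n : ℕ} (i : Fin n) (z y : EuclideanSpace ℝ (Fin n))
    (hz : z i = 0) : dist z y = dist z (WithLp.toLp 2 (Function.update y i (-(y i)))) := by
  rw [EuclideanSpace.dist_eq, EuclideanSpace.dist_eq]
  congr 1
  refine Finset.sum_congr rfl fun j _ => ?_
  rcases eq_or_ne j i with h | h
  · subst h
    simp [Function.update_self, hz, Real.dist_eq]
  · simp [Function.update_of_ne h]

lemma sMetric_halfspace {n : ℕ} (i : Fin n) (c y : EuclideanSpace ℝ (Fin n))
    (hc : 0 < c i) (hy : 0 < y i) :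
    sMetric {w : EuclideanSpace ℝ (Fin n) | 0 < w i} c y
      = dist c y / dist c (WithLp.toLp 2 (Function.update y i (-(y i)))) := by
  set y' : EuclideanSpace ℝ (Fin n) := WithLp.toLp 2 (Function.update y i (-(y i))) with hy'def
  have hy'i : y' i = -(y i) := Function.update_self i _ (WithLp.ofLp y)
  have hcy' : 0 < dist c y' := by
    rw [dist_pos]
    intro h
    have : c i = y' i := congrArg (fun v => v i) h
    rw [hy'i] at this
    linarith
  have hub : ∀ z : EuclideanSpace ℝ (Fin n), z i = 0 →
      dist c y / (dist z c + dist z y) ≤ dist c y / dist c y' := by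
    intro z hz
    have h1 : dist c y' ≤ dist z c + dist z y := by
      rw [my_dist_reflect i z y hz, ← hy'def]
      calc dist c y' ≤ dist c z + dist z y' := dist_triangle _ _ _
        _ = dist z c + dist z y' := by rw [dist_comm c z]
    exact div_le_div_of_nonneg_left dist_nonneg hcy' h1
  have hs : 0 < c i + y i := by linarith
  set t : ℝ := c i / (c i + y i) with htdef
  have ht0 : 0 ≤ t := by positivity
  have ht1 : t ≤ 1 := (div_le_one hs).2 (by linarith)
  set z₀ : EuclideanSpace ℝ (Fin n) := c + t • (y' - c) with hz₀def
  have hz₀ : z₀ i = 0 := by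
    have : z₀ i = c i + t * (y' i - c i) := rfl
    rw [this, hy'i, htdef]
    field_simp
    ring
  have hd1 : dist z₀ c = t * dist c y' := by
    rw [dist_eq_norm, dist_eq_norm]
    have h : z₀ - c = t • (y' - c) := by rw [hz₀def]; module
    rw [h, norm_smul, Real.norm_eq_abs, abs_of_nonneg ht0, norm_sub_rev]
  have hd2 : dist z₀ y' = (1 - t) * dist c y' := by
    rw [dist_eq_norm, dist_eq_norm]
    have h : z₀ - y' = (1 - t) • (c - y') := by
      rw [hz₀def]; module
    rw [h, norm_smul, Real.norm_eq_abs, abs_of_nonneg (by linarith)]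
  have hsum : dist z₀ c + dist z₀ y = dist c y' := by
    rw [my_dist_reflect i z₀ y hz₀, ← hy'def, hd1, hd2]; ring
  rw [sMetric, my_frontier_halfspace]
  have hM0 : 0 ≤ dist c y / dist c y' := by positivity
  apply le_antisymm
  · exact Real.iSup_le
      (fun z => Real.iSup_le (fun hz => hub z hz) hM0) hM0
  · have hbdd : BddAbove (Set.range fun z : EuclideanSpace ℝ (Fin n) =>
        ⨆ _ : z ∈ {w : EuclideanSpace ℝ (Fin n) | w i = 0},
          dist c y / (dist z c + dist z y)) :=
      ⟨dist c y / dist c y',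
        Set.forall_mem_range.2 fun z => Real.iSup_le (fun hz => hub z hz) hM0⟩
    refine le_ciSup_of_le hbdd z₀ ?_
    have hz₀' : z₀ ∈ {w : EuclideanSpace ℝ (Fin n) | w i = 0} := hz₀
    rw [ciSup_pos hz₀', hsum]

theorem euclideanBall_eq_sBall_halfSpace (n : ℕ) (hn : 1 ≤ n) (i : Fin n)
    (hi : (i : ℕ) = n - 1) (x : EuclideanSpace ℝ (Fin n)) (hx : 0 < x i)
    (r : ℝ) (hr : r ∈ Set.Ioo 0 (x i))
    (c : EuclideanSpace ℝ (Fin n)) (hc₁ : ∀ j, j ≠ i → c j = x j)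
    (hc₂ : c i = Real.sqrt ((x i)^2 - r^2)) :
    Metric.ball x r =
      sBall {w : EuclideanSpace ℝ (Fin n) | 0 < w i} c
        ((x i - Real.sqrt ((x i)^2 - r^2)) / r) := by
  obtain ⟨hr0, hrX⟩ := hr
  set X := x i with hXdef
  set q := Real.sqrt (X ^ 2 - r ^ 2) with hqdef
  have hq2 : q ^ 2 = X ^ 2 - r ^ 2 := Real.sq_sqrt (by nlinarith)
  have hq0 : 0 < q := Real.sqrt_pos.2 (by nlinarith)
  have hqX : q < X := by nlinarith
  have hr2 : r ^ 2 = X ^ 2 - q ^ 2 := by linarith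
  have hci : 0 < c i := by rw [hc₂]; exact hq0
  ext y
  have hS : ∑ j ∈ Finset.univ.erase i, (c j - y j) ^ 2
      = ∑ j ∈ Finset.univ.erase i, (x j - y j) ^ 2 :=
    Finset.sum_congr rfl fun j hj => by rw [hc₁ j (Finset.ne_of_mem_erase hj)]
  set S := ∑ j ∈ Finset.univ.erase i, (x j - y j) ^ 2 with hSdef
  have hS0 : 0 ≤ S := Finset.sum_nonneg fun j _ => sq_nonneg _
  set b := y i with hbdef
  have hdxy : dist x y ^ 2 = (X - b) ^ 2 + S := by
    rw [my_dist_sq, ← Finset.add_sum_erase _ _ (Finset.mem_univ i)]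
  have hdcy : dist c y ^ 2 = (q - b) ^ 2 + S := by
    rw [my_dist_sq, ← Finset.add_sum_erase _ _ (Finset.mem_univ i), hc₂, hS]
  set y' : EuclideanSpace ℝ (Fin n) := WithLp.toLp 2 (Function.update y i (-(y i))) with hy'def
  have hdcy' : dist c y' ^ 2 = (q + b) ^ 2 + S := by
    rw [my_dist_sq, ← Finset.add_sum_erase _ _ (Finset.mem_univ i)]
    have h1 : (c i - y' i) ^ 2 = (q + b) ^ 2 := by
      simp only [hy'def, WithLp.ofLp_toLp, Function.update_self, hc₂]; ring
    have h2 : ∑ j ∈ Finset.univ.erase i, (c j - y' j) ^ 2 = S := by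
      rw [← hS]
      exact Finset.sum_congr rfl fun j hj => by
        simp only [hy'def, WithLp.ofLp_toLp, Function.update_of_ne (Finset.ne_of_mem_erase hj)]
    rw [h1, h2]
  clear_value y' b S q X
  simp only [sBall, Set.mem_sep_iff, Set.mem_setOf_eq, Metric.mem_ball]
  constructor
  · intro hyb
    have hxy : dist x y < r := by rw [dist_comm]; exact hyb
    have hxy2 : dist x y ^ 2 < r ^ 2 := by
      have h0 : (0:ℝ) ≤ dist x y := dist_nonneg
      nlinarith
    have hgap : (X - b) ^ 2 + S < X ^ 2 - q ^ 2 := by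
      rw [← hdxy, ← hr2]; exact hxy2
    have hyi : 0 < y i := by
      rw [← hbdef]
      nlinarith [hgap, hS0, hq2]
    have hdcy'pos : 0 < dist c y' := by
      nlinarith [dist_nonneg (x := c) (y := y'), hdcy', hS0,
        mul_pos (add_pos hq0 hyi) (add_pos hq0 hyi)]
    refine ⟨hyi, ?_⟩
    rw [sMetric_halfspace i c y hci hyi, ← hy'def, div_lt_div_iff₀ hdcy'pos hr0]
    have hkey : (dist c y * r) ^ 2 < ((X - q) * dist c y') ^ 2 := by
      rw [mul_pow, mul_pow, hdcy, hdcy', hr2]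
      nlinarith [mul_pos (mul_pos hq0 (sub_pos.2 hqX))
        (sub_pos.2 hgap), hS0]
    have h1 : 0 ≤ dist c y * r := by positivity
    have h2 : 0 < (X - q) * dist c y' := mul_pos (by linarith) hdcy'pos
    nlinarith [hkey, h1, h2]
  · rintro ⟨hyi, hslt⟩
    have hyi' : 0 < y i := hyi
    have hdcy'pos : 0 < dist c y' := by
      nlinarith [dist_nonneg (x := c) (y := y'), hdcy', hS0,
        mul_pos (add_pos hq0 hyi') (add_pos hq0 hyi')]
    rw [sMetric_halfspace i c y hci hyi', ← hy'def,
      div_lt_div_iff₀ hdcy'pos hr0] at hslt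
    have hsq : (dist c y * r) ^ 2 < ((X - q) * dist c y') ^ 2 := by
      have h1 : 0 ≤ dist c y * r := by positivity
      nlinarith [hslt, h1]
    rw [mul_pow, mul_pow, hdcy, hdcy', hr2] at hsq
    have hgap : (X - b) ^ 2 + S < X ^ 2 - q ^ 2 := by
      nlinarith [hsq, mul_pos hq0 (sub_pos.2 hqX)]
    have hxy2 : dist x y ^ 2 < r ^ 2 := by rw [hdxy, hr2]; exact hgap
    have h0 : (0:ℝ) ≤ dist x y := dist_nonneg
    rw [dist_comm]
    nlinarith [hxy2, h0, hr0]
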